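/- Along any smooth solution of the system ρ(γ''(θ)+γ(θ))θ' + γ(θ)sin θ + γ'(θ)cos θ + β/ρ − 2λρ = 0, ρ' = cos θ, the quantity ρ(γ'(θ)cos θ + γ(θ)sin θ) + β log ρ − λρ² is constant in s. -/

import Mathlib

open Real

/-- First integral: along any smooth solution of
`ρ(γ''+γ)θ' + γ sin θ + γ' cos θ + β/ρ − 2λρ = 0`, `ρ' = cos θ`, the quantity
`ρ(γ' cos θ + γ sin θ) + β log ρ − λρ²` is constant. -/
theorem first_integral_constant
    (γ : ℝ → ℝ) (hγ : ContDiff ℝ 2 γ)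
    (β lam : ℝ) (hβ : 0 < β) (hlam : 0 < lam)
    (ρ θ : ℝ → ℝ) (hρ : Differentiable ℝ ρ) (hθ : Differentiable ℝ θ)
    (hρpos : ∀ s, 0 < ρ s)
    (hode : ∀ s, ρ s * (deriv (deriv γ) (θ s) + γ (θ s)) * deriv θ s +
        γ (θ s) * Real.sin (θ s) + deriv γ (θ s) * Real.cos (θ s) +
        β / ρ s - 2 * lam * ρ s = 0)
    (hρ' : ∀ s, deriv ρ s = Real.cos (θ s)) :
    ∀ s₁ s₂ : ℝ,
      ρ s₁ * (deriv γ (θ s₁) * Real.cos (θ s₁) + γ (θ s₁) * Real.sin (θ s₁)) +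
          β * Real.log (ρ s₁) - lam * ρ s₁ ^ 2 =
        ρ s₂ * (deriv γ (θ s₂) * Real.cos (θ s₂) + γ (θ s₂) * Real.sin (θ s₂)) +
          β * Real.log (ρ s₂) - lam * ρ s₂ ^ 2 := by
  have hγ1 : Differentiable ℝ γ := hγ.differentiable (by norm_num)
  have hγ' : Differentiable ℝ (deriv γ) := by
    have h2 : ContDiff ℝ (1+1) γ := by exact_mod_cast hγ
    exact (contDiff_succ_iff_deriv.mp h2).2.2.differentiable one_ne_zero
  set F : ℝ → ℝ := fun s =>
    ρ s * (deriv γ (θ s) * Real.cos (θ s) + γ (θ s) * Real.sin (θ s)) +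
      β * Real.log (ρ s) - lam * ρ s ^ 2 with hF
  have key : ∀ s, HasDerivAt F 0 s := by
    intro s
    have hθs : HasDerivAt θ (deriv θ s) s := (hθ s).hasDerivAt
    have hρs : HasDerivAt ρ (Real.cos (θ s)) s := by
      have := (hρ s).hasDerivAt
      rwa [hρ' s] at this
    have hγθ : HasDerivAt (fun t => γ (θ t)) (deriv γ (θ s) * deriv θ s) s :=
      ((hγ1 (θ s)).hasDerivAt).comp s hθs
    have hγ'θ : HasDerivAt (fun t => deriv γ (θ t))
        (deriv (deriv γ) (θ s) * deriv θ s) s :=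
      ((hγ' (θ s)).hasDerivAt).comp s hθs
    have hcos : HasDerivAt (fun t => Real.cos (θ t))
        (-Real.sin (θ s) * deriv θ s) s :=
      (Real.hasDerivAt_cos (θ s)).comp s hθs
    have hsin : HasDerivAt (fun t => Real.sin (θ t))
        (Real.cos (θ s) * deriv θ s) s :=
      (Real.hasDerivAt_sin (θ s)).comp s hθs
    have hlog : HasDerivAt (fun t => Real.log (ρ t))
        ((ρ s)⁻¹ * Real.cos (θ s)) s :=
      (Real.hasDerivAt_log (ne_of_gt (hρpos s))).comp s hρs
    have hD : HasDerivAt F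
        (Real.cos (θ s) * (deriv γ (θ s) * Real.cos (θ s) + γ (θ s) * Real.sin (θ s)) +
          ρ s * ((deriv (deriv γ) (θ s) * deriv θ s * Real.cos (θ s) +
              deriv γ (θ s) * (-Real.sin (θ s) * deriv θ s)) +
            (deriv γ (θ s) * deriv θ s * Real.sin (θ s) +
              γ (θ s) * (Real.cos (θ s) * deriv θ s))) +
          β * ((ρ s)⁻¹ * Real.cos (θ s)) -
          lam * (2 * ρ s ^ 1 * Real.cos (θ s))) s := by
      exact ((hρs.mul ((hγ'θ.mul hcos).add (hγθ.mul hsin))).add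
        (hlog.const_mul β)).sub ((hρs.pow 2).const_mul lam)
    convert hD using 1
    linear_combination (-Real.cos (θ s)) * hode s
  intro s₁ s₂
  have : ∀ a b : ℝ, F a = F b := by
    intro a b
    have := is_const_of_deriv_eq_zero (f := F)
      (fun s => (key s).differentiableAt) (fun s => (key s).deriv) a b
    exact this
  exact this s₁ s₂
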